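/- The function x ↦ (1+x)^(1/p) - (1-x)^(1/p) is convex on [0,1] for every real p ≥ 1, and hence for all x ∈ [0,1], (1+x)^(1/p) - (1-x)^(1/p) ≤ 2^(1/p) * x. -/

import Mathlib

theorem stmt_1 (p : ℝ) (hp : 1 ≤ p) :
    ConvexOn ℝ (Set.Icc (0 : ℝ) 1) (fun x : ℝ => (1 + x) ^ (1 / p) - (1 - x) ^ (1 / p)) ∧
      ∀ x ∈ Set.Icc (0 : ℝ) 1,
        (1 + x) ^ (1 / p) - (1 - x) ^ (1 / p) ≤ 2 ^ (1 / p) * x := by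
  have hp0 : 0 < p := lt_of_lt_of_le one_pos hp
  set c : ℝ := 1 / p with hcdef
  have hc0 : 0 < c := by positivity
  have hc1 : c ≤ 1 := by rw [hcdef, div_le_one hp0]; exact hp
  set f : ℝ → ℝ := fun x => (1 + x) ^ c - (1 - x) ^ c with hfdef
  set g : ℝ → ℝ := fun x => c * (1 + x) ^ (c - 1) + c * (1 - x) ^ (c - 1) with hgdef
  have hcont : ContinuousOn f (Set.Icc 0 1) := by
    apply ContinuousOn.sub
    · exact ((continuous_const.add continuous_id).continuousOn).rpow_const
        (fun x _ => Or.inr hc0.le)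
    · exact ((continuous_const.sub continuous_id).continuousOn).rpow_const
        (fun x _ => Or.inr hc0.le)
  have hderiv : ∀ x ∈ Set.Ioo (0 : ℝ) 1, HasDerivAt f (g x) x := by
    intro x hx
    have h1 : (0 : ℝ) < 1 + x := by linarith [hx.1]
    have h2 : (0 : ℝ) < 1 - x := by linarith [hx.2]
    have d1 : HasDerivAt (fun y : ℝ => (1 + y) ^ c) (1 * c * (1 + x) ^ (c - 1)) x :=
      ((hasDerivAt_id x).const_add 1).rpow_const (Or.inl h1.ne')
    have d2 : HasDerivAt (fun y : ℝ => (1 - y) ^ c) ((-1) * c * (1 - x) ^ (c - 1)) x :=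
      ((hasDerivAt_id x).const_sub 1).rpow_const (Or.inl h2.ne')
    have := d1.sub d2
    convert this using 1
    · rfl
    · rfl
    · rfl
    simp [hgdef]
  have hderivg : ∀ x ∈ Set.Ioo (0 : ℝ) 1,
      HasDerivAt g (c * (c - 1) * ((1 + x) ^ (c - 2) - (1 - x) ^ (c - 2))) x := by
    intro x hx
    have h1 : (0 : ℝ) < 1 + x := by linarith [hx.1]
    have h2 : (0 : ℝ) < 1 - x := by linarith [hx.2]
    have d1 : HasDerivAt (fun y : ℝ => (1 + y) ^ (c - 1)) (1 * (c - 1) * (1 + x) ^ (c - 1 - 1)) x :=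
      ((hasDerivAt_id x).const_add 1).rpow_const (Or.inl h1.ne')
    have d2 : HasDerivAt (fun y : ℝ => (1 - y) ^ (c - 1)) ((-1) * (c - 1) * (1 - x) ^ (c - 1 - 1)) x :=
      ((hasDerivAt_id x).const_sub 1).rpow_const (Or.inl h2.ne')
    have := (d1.const_mul c).add (d2.const_mul c)
    convert this using 1
    · rfl
    · rfl
    · rfl
    have e1 : c - 1 - 1 = c - 2 := by ring
    rw [e1]; ring
  have hEq : ∀ x ∈ Set.Ioo (0 : ℝ) 1, deriv f =ᶠ[nhds x] g := by
    intro x hx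
    exact Filter.eventuallyEq_of_mem (isOpen_Ioo.mem_nhds hx)
      (fun y hy => (hderiv y hy).deriv)
  have hconv : ConvexOn ℝ (Set.Icc (0 : ℝ) 1) f := by
    apply convexOn_of_deriv2_nonneg (convex_Icc 0 1) hcont
    · rw [interior_Icc]
      exact fun x hx => (hderiv x hx).differentiableAt.differentiableWithinAt
    · rw [interior_Icc]
      intro x hx
      have : DifferentiableAt ℝ g x := (hderivg x hx).differentiableAt
      exact ((hEq x hx).differentiableAt_iff.mpr this).differentiableWithinAt
    · rw [interior_Icc]
      intro x hx
      have h1 : (0 : ℝ) < 1 + x := by linarith [hx.1]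
      have h2 : (0 : ℝ) < 1 - x := by linarith [hx.2]
      have e : deriv^[2] f x = c * (c - 1) * ((1 + x) ^ (c - 2) - (1 - x) ^ (c - 2)) := by
        show deriv (deriv f) x = _
        rw [(hEq x hx).deriv_eq]
        exact (hderivg x hx).deriv
      rw [e]
      have hb : (1 + x) ^ (c - 2) ≤ (1 - x) ^ (c - 2) :=
        Real.rpow_le_rpow_of_nonpos h2 (by linarith [hx.1]) (by linarith)
      have hcc : c * (c - 1) ≤ 0 :=
        mul_nonpos_of_nonneg_of_nonpos hc0.le (by linarith)
      nlinarith [mul_nonneg (neg_nonneg.mpr hcc) (sub_nonneg.mpr hb)]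
  refine ⟨hconv, ?_⟩
  intro x hx
  have h0 : (0 : ℝ) ∈ Set.Icc (0 : ℝ) 1 := by constructor <;> norm_num
  have h1 : (1 : ℝ) ∈ Set.Icc (0 : ℝ) 1 := by constructor <;> norm_num
  have key := hconv.2 h0 h1 (by linarith [hx.2] : (0:ℝ) ≤ 1 - x) hx.1 (by ring)
  simp only [smul_eq_mul, mul_zero, mul_one, zero_add] at key
  have f0 : f 0 = 0 := by simp [hfdef]
  have f1 : f 1 = 2 ^ c := by
    norm_num [hfdef, Real.zero_rpow hc0.ne']
  rw [f0, f1] at key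
  calc (1 + x) ^ c - (1 - x) ^ c = f x := rfl
    _ ≤ (1 - x) * 0 + x * 2 ^ c := key
    _ = 2 ^ c * x := by ring
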